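/- A word w over {a,b} is smooth if and only if its complement w̄ is smooth, and if and only if its reversal w̃ is smooth. -/

import Mathlib

/-- Run-length encoding Δ: the list of lengths of maximal runs. -/
def rle (w : List ℕ) : List ℕ := (w.splitBy (· == ·)).map List.length

/-- Trim the first entry if it is less than `b`. -/
def trimF (b : ℕ) : List ℕ → List ℕ
  | [] => []
  | x :: xs => if x < b then xs else x :: xs

/-- The derivative D: run lengths, dropping boundary runs shorter than `b`. -/
def derW (b : ℕ) (w : List ℕ) : List ℕ :=
  (trimF b ((trimF b (rle w)).reverse)).reverse

/-- `w` is a word over the alphabet `{a, b}`. -/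
def WordOver (a b : ℕ) (w : List ℕ) : Prop := ∀ c ∈ w, c = a ∨ c = b

/-- `w` is differentiable: all runs have length at most `b`, and all
interior runs have length exactly `a` or `b`. -/
def DiffW (a b : ℕ) (w : List ℕ) : Prop :=
  (∀ t ∈ rle w, t ≤ b) ∧ (∀ t ∈ ((rle w).drop 1).dropLast, t = a ∨ t = b)

/-- The closure ŵ: extend the first (resp. last) run to length `b`
if its length is strictly greater than `a`. -/
def clos (a b : ℕ) (w : List ℕ) : List ℕ :=
  (if a < (rle w).headD 0 then List.replicate (b - (rle w).headD 0) (w.headD 0) else [])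
    ++ w ++
  (if a < (rle w).getLastD 0 then List.replicate (b - (rle w).getLastD 0) (w.getLastD 0) else [])

/-- ρ(w) = D(ŵ). -/
def rhoW (a b : ℕ) (w : List ℕ) : List ℕ := derW b (clos a b w)

/-- `w` is a smooth (C^∞_{a,b}) word: it is a word over `{a,b}`, every iterated
closure is differentiable, and iterating ρ eventually yields the empty word. -/
def SmoothW (a b : ℕ) (w : List ℕ) : Prop :=
  WordOver a b w ∧ (∀ k : ℕ, DiffW a b (clos a b ((rhoW a b)^[k] w))) ∧
    ∃ k : ℕ, (rhoW a b)^[k] w = []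

/-- n-th power of a word (n-fold concatenation). -/
def lpow (u : List ℕ) (n : ℕ) : List ℕ := (List.replicate n u).flatten

/-- The pseudo-inverse Δ_α^{-1}: maps u₁u₂u₃⋯ to α^{u₁} β^{u₂} α^{u₃} ⋯ . -/
def dinv (α β : ℕ) : List ℕ → List ℕ
  | [] => []
  | t :: ts => List.replicate t α ++ dinv β α ts


open List

/-- A valid run decomposition. -/
def ChunksOf (c : List (List ℕ)) : Prop :=
  (∀ u ∈ c, ∃ n x, u = List.replicate (n+1) x) ∧
    c.IsChain (fun u v => u.getLast? ≠ v.head?)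

theorem chunks_unique : ∀ (c₁ c₂ : List (List ℕ)), ChunksOf c₁ → ChunksOf c₂ →
    c₁.flatten = c₂.flatten → c₁ = c₂ := by
  intro c₁
  induction c₁ with
  | nil =>
    rintro (_ | ⟨v, vs⟩) _ h2 hf
    · rfl
    · obtain ⟨n, x, rfl⟩ := h2.1 _ (mem_cons_self ..)
      simp at hf
  | cons u us IH =>
    rintro (_ | ⟨v, vs⟩) h1 h2 hf
    · obtain ⟨n, x, rfl⟩ := h1.1 _ (mem_cons_self ..)
      simp at hf
    · obtain ⟨m, x, rfl⟩ := h1.1 _ (mem_cons_self ..)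
      obtain ⟨n, y, rfl⟩ := h2.1 _ (mem_cons_self ..)
      simp only [flatten_cons] at hf
      have hxy : x = y := by
        have := congrArg List.head? hf
        rw [head?_append_of_ne_nil _ (by simp), head?_append_of_ne_nil _ (by simp)] at this
        simpa [replicate_succ] using this
      subst hxy
      -- key: heads of the rest are not equal to x
      have key : ∀ (ws : List (List ℕ)) (k : ℕ), ChunksOf ((replicate (k+1) x) :: ws) →
          ws.flatten.head? ≠ some x := by
        rintro (_|⟨w,ws⟩) k hc
        · simp
        · have hch := hc.2
          rw [isChain_cons_cons] at hch
          obtain ⟨n', x', rfl⟩ := hc.1 _ (mem_cons_of_mem _ (mem_cons_self ..))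
          intro h
          rw [flatten_cons, head?_append_of_ne_nil _ (by simp)] at h
          apply hch.1
          rw [h, getLast?_replicate]
          simp
      have hdrop : ∀ (m n : ℕ) (A B : List ℕ), m < n →
          replicate (m+1) x ++ A = replicate (n+1) x ++ B → A.head? = some x := by
        intro m n A B h hf
        have := congrArg (List.drop (m+1)) hf
        rw [drop_left' (by simp), drop_append_of_le_length (by simp; omega),
          drop_replicate] at this
        rw [this, head?_append_of_ne_nil _ (by simp; omega), head?_replicate,
          if_neg (by omega)]
      have hmn : m = n := by
        by_contra hne
        rcases Nat.lt_or_ge m n with h | h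
        · exact key us m h1 (hdrop m n _ _ h hf)
        · exact key vs n h2 (hdrop n m _ _ (by omega) hf.symm)
      subst hmn
      have htail : us.flatten = vs.flatten := by
        have := congrArg (List.drop (m+1)) hf
        rwa [drop_left' (by simp), drop_left' (by simp)] at this
      have : us = vs := IH vs ⟨fun u hu => h1.1 _ (mem_cons_of_mem _ hu), h1.2.tail⟩
        ⟨fun u hu => h2.1 _ (mem_cons_of_mem _ hu), h2.2.tail⟩ htail
      rw [this]

theorem chain'_eq_replicate : ∀ (m : List ℕ), m ≠ [] → m.IsChain (fun x y => (x == y) = true) →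
    ∃ n x, m = replicate (n+1) x := by
  intro m
  induction m with
  | nil => simp
  | cons x m IH =>
    intro _ hc
    rcases m with _ | ⟨y, m⟩
    · exact ⟨0, x, rfl⟩
    · rw [isChain_cons_cons] at hc
      obtain ⟨n, z, hz⟩ := IH (by simp) hc.2
      have hxy : x = y := by simpa using hc.1
      have hyz : y = z := by
        have := congrArg List.head? hz
        simpa [replicate_succ] using this
      exact ⟨n+1, z, by rw [replicate_succ, ← hz, hxy, hyz]⟩

theorem chunksOf_splitBy (l : List ℕ) : ChunksOf (l.splitBy (· == ·)) := by
  constructor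
  · intro u hu
    exact chain'_eq_replicate u (ne_nil_of_mem_splitBy hu) (isChain_of_mem_splitBy hu)
  · apply (isChain_getLast_head_splitBy (· == ·) l).imp
    intro u v ⟨hu, hv, hr⟩
    rw [getLast?_eq_getLast hu, head?_eq_head hv]
    intro h
    rw [Option.some_inj] at h
    simp [h] at hr

theorem rle_eq_of_chunks {l : List ℕ} {c : List (List ℕ)} (hc : ChunksOf c)
    (hf : c.flatten = l) : rle l = c.map List.length := by
  rw [rle, chunks_unique _ c (chunksOf_splitBy l) hc (by rw [flatten_splitBy, hf])]

theorem chain'_imp_mem {α : Type*} {R S : α → α → Prop} : ∀ (l : List α),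
    (∀ a ∈ l, ∀ b ∈ l, R a b → S a b) → l.IsChain R → l.IsChain S := by
  intro l
  induction l with
  | nil => exact fun _ _ => List.isChain_nil
  | cons x l IH =>
    rcases l with _ | ⟨y, m⟩
    · exact fun _ _ => List.isChain_singleton x
    · intro h hc
      rw [List.isChain_cons_cons] at hc ⊢
      exact ⟨h x (by simp) y (by simp) hc.1,
        IH (fun a ha b hb => h a (List.mem_cons_of_mem _ ha) b (List.mem_cons_of_mem _ hb)) hc.2⟩

theorem rle_reverse (l : List ℕ) : rle l.reverse = (rle l).reverse := by
  have hc := chunksOf_splitBy l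
  have : rle l.reverse = (((l.splitBy (· == ·)).map List.reverse).reverse).map List.length := by
    apply rle_eq_of_chunks
    · constructor
      · intro u hu
        simp only [List.mem_reverse, List.mem_map] at hu
        obtain ⟨v, hv, rfl⟩ := hu
        obtain ⟨n, x, rfl⟩ := hc.1 v hv
        exact ⟨n, x, by simp⟩
      · rw [List.isChain_reverse]
        apply (List.isChain_map _).mpr
        apply hc.2.imp
        intro u v h
        show (v.reverse).getLast? ≠ (u.reverse).head?
        rw [List.head?_reverse, List.getLast?_reverse]
        exact fun h' => h h'.symm
    · rw [← List.reverse_flatten, List.flatten_splitBy]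
  rw [this, rle]
  simp [Function.comp_def]

theorem rle_map {l : List ℕ} {f : ℕ → ℕ}
    (hf : ∀ x ∈ l, ∀ y ∈ l, f x = f y → x = y) :
    rle (l.map f) = rle l := by
  have hc := chunksOf_splitBy l
  have hmem : ∀ u ∈ l.splitBy (· == ·), ∀ x ∈ u, x ∈ l := by
    intro u hu x hx
    rw [← List.flatten_splitBy (· == ·) l]
    exact List.mem_flatten.mpr ⟨u, hu, hx⟩
  have : rle (l.map f) = ((l.splitBy (· == ·)).map (List.map f)).map List.length := by
    apply rle_eq_of_chunks
    · constructor
      · intro u hu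
        simp only [List.mem_map] at hu
        obtain ⟨v, hv, rfl⟩ := hu
        obtain ⟨n, x, rfl⟩ := hc.1 v hv
        exact ⟨n, f x, by simp⟩
      · apply (List.isChain_map _).mpr
        refine chain'_imp_mem _ ?_ hc.2
        intro u hu v hv h
        obtain ⟨n, x, rfl⟩ := hc.1 u hu
        obtain ⟨m, y, rfl⟩ := hc.1 v hv
        simp only [List.getLast?_map, List.head?_map]
        intro heq
        apply h
        simp only [List.getLast?_replicate, List.head?_replicate, Nat.add_eq_zero,
          Nat.one_ne_zero, and_false, if_false, Option.map_some] at heq ⊢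
        rw [Option.some_inj] at heq ⊢
        exact hf x (hmem _ hu x (by simp)) y (hmem _ hv y (by simp)) heq
    · rw [← List.map_flatten, List.flatten_splitBy]
  rw [this]
  simp [rle, Function.comp_def]

/-- Trim the last entry if it is less than `b`. -/
def trimL (b : ℕ) (l : List ℕ) : List ℕ := (trimF b l.reverse).reverse

theorem derW_eq (b : ℕ) (w : List ℕ) : derW b w = trimL b (trimF b (rle w)) := rfl

theorem trimL_cons (b x : ℕ) {m : List ℕ} (hm : m ≠ []) :
    trimL b (x :: m) = x :: trimL b m := by
  obtain ⟨h, t, ht⟩ : ∃ h t, m.reverse = h :: t := by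
    rcases hr : m.reverse with _ | ⟨h, t⟩
    · exact absurd (by simpa using congrArg List.reverse hr) hm
    · exact ⟨h, t, rfl⟩
  rw [trimL, trimL, List.reverse_cons, ht]
  rw [show (h :: t) ++ [x] = h :: (t ++ [x]) from rfl]
  simp only [trimF]
  split
  · simp
  · simp

theorem trimF_trimL_comm (b : ℕ) : ∀ l : List ℕ, trimF b (trimL b l) = trimL b (trimF b l) := by
  intro l
  rcases l with _ | ⟨x, m⟩
  · rfl
  rcases eq_or_ne m [] with rfl | hm
  · by_cases hx : x < b <;> simp [trimL, trimF, hx]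
  · rw [trimL_cons b x hm]
    simp only [trimF]
    split
    · rfl
    · rw [trimL_cons b x hm]

theorem reverse_trimL (b : ℕ) (l : List ℕ) : (trimL b l).reverse = trimF b l.reverse := by
  rw [trimL, List.reverse_reverse]

theorem trimL_reverse (b : ℕ) (l : List ℕ) : trimL b l.reverse = (trimF b l).reverse := by
  rw [trimL, List.reverse_reverse]

theorem derW_reverse (b : ℕ) (w : List ℕ) : derW b w.reverse = (derW b w).reverse := by
  rw [derW_eq, derW_eq, rle_reverse]
  rw [show trimF b (rle w).reverse = (trimL b (rle w)).reverse from (reverse_trimL b _).symm]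
  rw [trimL_reverse, trimF_trimL_comm]

theorem rle_nil : rle [] = [] := rfl

theorem derW_rle_congr (b : ℕ) {v u : List ℕ} (h : rle v = rle u) : derW b v = derW b u := by
  rw [derW_eq, derW_eq, h]

theorem clos_nil (a b : ℕ) : clos a b [] = [] := by
  simp [clos, show rle [] = [] from rfl]

theorem rhoW_nil (a b : ℕ) : rhoW a b [] = [] := by
  rw [rhoW, clos_nil]
  rfl

theorem clos_reverse (a b : ℕ) (w : List ℕ) : clos a b w.reverse = (clos a b w).reverse := by
  simp only [clos, rle_reverse, List.headD_eq_head?_getD, List.getLastD_eq_getLast?,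
    List.head?_reverse, List.getLast?_reverse, List.reverse_append, apply_ite List.reverse,
    List.reverse_replicate, List.reverse_nil, List.append_assoc]

theorem rhoW_reverse (a b : ℕ) (w : List ℕ) : rhoW a b w.reverse = (rhoW a b w).reverse := by
  rw [rhoW, rhoW, clos_reverse, derW_reverse]

theorem drop_dropLast_reverse (l : List ℕ) :
    ((l.reverse).drop 1).dropLast = ((l.drop 1).dropLast).reverse := by
  rw [List.drop_one, List.drop_one, List.tail_reverse, List.dropLast_reverse,
    List.tail_dropLast]

theorem diffW_rle_congr (a b : ℕ) {v u : List ℕ} (h : rle v = rle u) :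
    (DiffW a b v ↔ DiffW a b u) := by
  rw [DiffW, DiffW, h]

theorem diffW_reverse (a b : ℕ) (w : List ℕ) : DiffW a b w.reverse ↔ DiffW a b w := by
  simp only [DiffW, rle_reverse, drop_dropLast_reverse, List.mem_reverse]

theorem wordOver_clos (a b : ℕ) {w : List ℕ} (hwo : WordOver a b w) :
    WordOver a b (clos a b w) := by
  rcases eq_or_ne w [] with rfl | hw
  · rw [clos_nil]; intro c hc; simp at hc
  intro c hc
  rw [clos] at hc
  simp only [List.mem_append] at hc
  have hh : w.headD 0 ∈ w := by
    rcases w with _ | ⟨h, t⟩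
    · exact absurd rfl hw
    · simp
  have hl : w.getLastD 0 ∈ w := by
    rw [List.getLastD_eq_getLast?, List.getLast?_eq_getLast hw]
    exact List.getLast_mem hw
  rcases hc with (hc | hc) | hc
  · split at hc
    · rw [List.eq_of_mem_replicate hc]; exact hwo _ hh
    · simp at hc
  · exact hwo _ hc
  · split at hc
    · rw [List.eq_of_mem_replicate hc]; exact hwo _ hl
    · simp at hc

theorem wordOver_map (a b : ℕ) (hab : a ≠ b) {w : List ℕ} (hwo : WordOver a b w) :
    WordOver a b (w.map (fun c => if c = a then b else a)) := by
  intro c hc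
  simp only [List.mem_map] at hc
  obtain ⟨x, hx, rfl⟩ := hc
  rcases hwo x hx with rfl | rfl
  · simp
  · simp [Ne.symm hab]

theorem rle_map_comp (a b : ℕ) (hab : a ≠ b) {w : List ℕ} (hwo : WordOver a b w) :
    rle (w.map (fun c => if c = a then b else a)) = rle w := by
  apply rle_map
  intro x hx y hy hxy
  rcases hwo x hx with rfl | rfl <;> rcases hwo y hy with rfl | rfl <;>
    simp [hab, Ne.symm hab] at hxy ⊢

theorem clos_map (a b : ℕ) (hab : a ≠ b) {w : List ℕ} (hwo : WordOver a b w) :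
    clos a b (w.map (fun c => if c = a then b else a)) =
      (clos a b w).map (fun c => if c = a then b else a) := by
  set f : ℕ → ℕ := fun c => if c = a then b else a with hf
  rcases eq_or_ne w [] with rfl | hw
  · simp [clos_nil]
  have hr : rle (w.map f) = rle w := rle_map_comp a b hab hwo
  have hh : (w.map f).headD 0 = f (w.headD 0) := by
    rcases w with _ | ⟨h, t⟩
    · exact absurd rfl hw
    · rfl
  have hl : (w.map f).getLastD 0 = f (w.getLastD 0) := by
    rw [List.getLastD_eq_getLast?, List.getLastD_eq_getLast?, List.getLast?_map,
      List.getLast?_eq_getLast hw]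
    rfl
  simp only [clos, hr, hh, hl, List.map_append, apply_ite (List.map f), List.map_replicate,
    List.map_nil]

theorem rhoW_map (a b : ℕ) (hab : a ≠ b) {w : List ℕ} (hwo : WordOver a b w) :
    rhoW a b (w.map (fun c => if c = a then b else a)) = rhoW a b w := by
  rw [rhoW, rhoW, clos_map a b hab hwo]
  exact derW_rle_congr b (rle_map_comp a b hab (wordOver_clos a b hwo))

theorem stmt6 (a b : ℕ) (ha : 0 < a) (hab : a < b) (w : List ℕ)
    (hwo : WordOver a b w) :
    (SmoothW a b w ↔ SmoothW a b (w.map fun c => if c = a then b else a)) ∧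
    (SmoothW a b w ↔ SmoothW a b w.reverse) := by
  have hab' : a ≠ b := Nat.ne_of_lt hab
  -- iterates commute with reversal
  have hrev_iter : ∀ (k : ℕ) (v : List ℕ),
      (rhoW a b)^[k] v.reverse = ((rhoW a b)^[k] v).reverse := by
    intro k
    induction k with
    | zero => intro v; rfl
    | succ k IH =>
      intro v
      rw [Function.iterate_succ_apply, Function.iterate_succ_apply, rhoW_reverse, IH]
  -- smoothness transfers to the reversal
  have smooth_rev : ∀ v : List ℕ, SmoothW a b v → SmoothW a b v.reverse := by
    rintro v ⟨h1, h2, k, h3⟩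
    refine ⟨fun c hc => h1 c (List.mem_reverse.mp hc), ?_, k, ?_⟩
    · intro j
      rw [hrev_iter, clos_reverse]
      exact (diffW_reverse a b _).mpr (h2 j)
    · rw [hrev_iter, h3]
      rfl
  -- smoothness transfers to the complement
  have smooth_map : ∀ v : List ℕ, WordOver a b v → SmoothW a b v →
      SmoothW a b (v.map fun c => if c = a then b else a) := by
    rintro v hv ⟨h1, h2, k, h3⟩
    refine ⟨wordOver_map a b hab' hv, ?_, k + 1, ?_⟩
    · intro j
      rcases j with _ | j
      · rw [Function.iterate_zero_apply, clos_map a b hab' hv]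
        exact (diffW_rle_congr a b (rle_map_comp a b hab' (wordOver_clos a b hv))).mpr (h2 0)
      · rw [Function.iterate_succ_apply, rhoW_map a b hab' hv,
          ← Function.iterate_succ_apply]
        exact h2 (j + 1)
    · rw [Function.iterate_succ_apply, rhoW_map a b hab' hv,
        ← Function.iterate_succ_apply, Function.iterate_succ_apply', h3, rhoW_nil]
  have hmapmap : ((w.map fun c => if c = a then b else a).map
      fun c => if c = a then b else a) = w := by
    rw [List.map_map]
    have : ∀ c ∈ w, ((fun c => if c = a then b else a) ∘ fun c => if c = a then b else a) c
        = id c := by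
      intro c hc
      rcases hwo c hc with rfl | rfl <;> simp [hab', Ne.symm hab']
    rw [List.map_congr_left this, List.map_id]
  constructor
  · constructor
    · exact smooth_map w hwo
    · intro hs
      have := smooth_map _ (wordOver_map a b hab' hwo) hs
      rwa [hmapmap] at this
  · constructor
    · exact smooth_rev w
    · intro hs
      have := smooth_rev _ hs
      rwa [List.reverse_reverse] at this
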